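/- Let A be a bounded normal operator on a nontrivial complex Hilbert space H with 0 ∈ spectrum(A). If 0 is an isolated point of the spectrum of A, then the range of A is closed. -/

import Mathlib

theorem range_closed_of_isolated_zero_of_normal
    {H : Type*} [NormedAddCommGroup H] [InnerProductSpace ℂ H] [CompleteSpace H]
    [Nontrivial H]
    (A : H →L[ℂ] H)
    (hA : ContinuousLinearMap.adjoint A * A = A * ContinuousLinearMap.adjoint A)
    (h0 : (0 : ℂ) ∈ spectrum ℂ A)
    (hiso : ∃ γ > (0 : ℝ), ∀ lam ∈ spectrum ℂ A, lam ≠ 0 → γ ≤ ‖lam‖) :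
    IsClosed (Set.range ⇑A) := by
  obtain ⟨γ, hγ, hspec⟩ := hiso
  haveI : IsStarNormal A := ⟨by rw [ContinuousLinearMap.star_eq_adjoint]; exact hA⟩
  set f : ℂ → ℂ := fun z => if γ ≤ ‖z‖ then z⁻¹ else 0 with hf
  have hfc : ContinuousOn f (spectrum ℂ A) := by
    intro z hz
    by_cases hz0 : z = 0
    · subst hz0
      have hev : f =ᶠ[nhdsWithin 0 (spectrum ℂ A)] fun _ => (0 : ℂ) := by
        have hball : Metric.ball (0 : ℂ) γ ∈ nhdsWithin 0 (spectrum ℂ A) :=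
          nhdsWithin_le_nhds (Metric.ball_mem_nhds _ hγ)
        filter_upwards [hball, self_mem_nhdsWithin] with w hw hws
        by_cases hw0 : w = 0
        · simp [hf, hw0, not_le.mpr hγ]
        · exact absurd (hspec w hws hw0) (not_le.mpr (by simpa using hw))
      have : ContinuousWithinAt (fun _ => (0 : ℂ)) (spectrum ℂ A) 0 :=
        continuousWithinAt_const
      refine this.congr_of_eventuallyEq hev ?_
      simp [hf, not_le.mpr hγ]
    · have hγz : γ ≤ ‖z‖ := hspec z hz hz0
      have hev : f =ᶠ[nhdsWithin z (spectrum ℂ A)] fun w => w⁻¹ := by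
        have hopen : {w : ℂ | w ≠ 0} ∈ nhdsWithin z (spectrum ℂ A) :=
          nhdsWithin_le_nhds (isOpen_compl_singleton.mem_nhds hz0)
        filter_upwards [hopen, self_mem_nhdsWithin] with w hw hws
        show (if γ ≤ ‖w‖ then w⁻¹ else 0) = w⁻¹
        rw [if_pos (hspec w hws hw)]
      have hinv : ContinuousWithinAt (fun w : ℂ => w⁻¹) (spectrum ℂ A) z :=
        (continuousAt_inv₀ hz0).continuousWithinAt
      refine hinv.congr_of_eventuallyEq hev ?_
      show (if γ ≤ ‖z‖ then z⁻¹ else 0) = z⁻¹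
      rw [if_pos hγz]
  set B : H →L[ℂ] H := cfc f A with hB
  have hid : ContinuousOn (fun z : ℂ => z) (spectrum ℂ A) := continuousOn_id
  have e1 : cfc (fun z : ℂ => (z * f z) * z) A = A * B * A := by
    rw [cfc_mul _ _ A (show ContinuousOn (fun z : ℂ => z * f z) (spectrum ℂ A) from (continuousOn_id' _).mul hfc) hid,
      cfc_mul _ _ A hid hfc, cfc_id' ℂ A]
  have e2 : cfc (fun z : ℂ => (z * f z) * z) A = cfc (fun z : ℂ => z) A := by
    apply cfc_congr
    intro z hz
    by_cases hz0 : z = 0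
    · simp [hz0]
    · have hγz : γ ≤ ‖z‖ := hspec z hz hz0
      simp only [hf, if_pos hγz]
      field_simp
  have key : A * B * A = A := by rw [← e1, e2, cfc_id' ℂ A]
  have hrange : Set.range ⇑A = {x | (A * B) x = x} := by
    ext x
    constructor
    · rintro ⟨y, rfl⟩
      show (A * B) (A y) = A y
      rw [← ContinuousLinearMap.mul_apply, key]
    · intro h
      exact ⟨B x, by simpa [ContinuousLinearMap.mul_apply] using h⟩
  rw [hrange]
  exact isClosed_eq (A * B).continuous continuous_id
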